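/- Let k be a perfect field of characteristic 3 and t ∈ k, t ≠ 0, with t* ∈ k the unique cube root of t. Then the polynomial (1/t*)·x^6 + x^4 + x^2 + 1 is squarefree over k̄ if and only if the corresponding curve y^2 = (1/t*)·x^6 + x^4 + x^2 + 1 is a genus 2 curve; and squarefreeness holds whenever the original D12-moduli conditions hold, in particular whenever t ∉ {0, −1} (equivalently the discriminant of (1/t*)·x^6 + x^4 + x^2 + 1, computed in characteristic 3, is nonzero for these t*). -/
import Mathlib


open Polynomial

/-- over a perfect field of characteristic 3, for `t ∉ {0, −1}` with cube
root `t*`, the polynomial `(1/t*)·x⁶ + x⁴ + x² + 1` is squarefree over the algebraic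
closure, i.e. `y² = (1/t*)·x⁶ + x⁴ + x² + 1` is a genus 2 curve. -/
theorem stmt_15 {k K : Type*} [Field k] [CharP k 3] [PerfectRing k 3] [Field K]
    [Algebra k K] [IsAlgClosure k K] (t tstar : k) (ht : t ≠ 0)
    (htstar : tstar ^ 3 = t) (htm1 : t ≠ -1) :
    Squarefree ((C (algebraMap k K (1 / tstar)) * X ^ 6 + X ^ 4 + X ^ 2 + 1 :
      Polynomial K)) := by
  haveI : IsAlgClosed K := IsAlgClosure.isAlgClosed k
  haveI : CharP K 3 := charP_of_injective_algebraMap (algebraMap k K).injective 3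
  have hts : tstar ≠ 0 := by
    rintro rfl
    exact ht (by rw [← htstar]; ring)
  set a : K := algebraMap k K (1 / tstar) with ha_def
  have ha : a ≠ 0 := by
    rw [ha_def, ne_eq, _root_.map_eq_zero, one_div, inv_eq_zero]
    exact hts
  have h3 : (3 : K) = 0 := CharP.cast_eq_zero K 3
  apply Polynomial.Separable.squarefree
  rw [Polynomial.Separable]
  rw [Polynomial.isCoprime_iff_aeval_ne_zero_of_isAlgClosed (k := K) K]
  intro x
  by_contra hcon
  push_neg at hcon
  obtain ⟨h1, h2⟩ := hcon
  simp only [derivative_add, derivative_mul, derivative_C, derivative_X_pow, derivative_one,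
    map_add, map_mul, map_pow, aeval_C, aeval_X, map_one, zero_mul, map_zero, add_zero,
    zero_add, Algebra.algebraMap_self_apply, map_natCast] at h1 h2
  norm_num at h1 h2
  -- h1 : a * x ^ 6 + x ^ 4 + x ^ 2 + 1 = 0
  -- h2 : a * (6 * x ^ 5) + 4 * x ^ 3 + 2 * x = 0
  rcases eq_or_ne x 0 with rfl | hx
  · simp at h1
  · have hmul : x * (x ^ 2 + 2) = 0 := by
      linear_combination h2 - (2 * a * x ^ 5 + x ^ 3) * h3
    rcases mul_eq_zero.mp hmul with h | h
    · exact hx h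
    · have hx2 : x ^ 2 = 1 := by linear_combination h - h3
      exact ha (by linear_combination h1 - (a * (x ^ 4 + x ^ 2 + 1) + x ^ 2 + 2) * hx2 - h3)
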